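/- Let φ : [0,∞) → [0,∞) be continuous and c > 0 be such that φ(t) − φ(s) ≤ −c ∫_s^t φ(r) dr for all 0 ≤ s ≤ t. Then φ(t) ≤ e^{−ct} φ(0) for all t ≥ 0. -/

import Mathlib

/-- Differential Gronwall inequality with negative rate: if `φ : [0,∞) → [0,∞)` is
continuous and `φ(t) - φ(s) ≤ -c ∫_s^t φ(r) dr` for all `0 ≤ s ≤ t` with `c > 0`,
then `φ(t) ≤ e^{-ct} φ(0)`. -/
theorem gronwall_neg_rate
    (φ : ℝ → ℝ) (c : ℝ) (hc : 0 < c)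
    (hcont : ContinuousOn φ (Set.Ici 0))
    (hnonneg : ∀ t, 0 ≤ t → 0 ≤ φ t)
    (hineq : ∀ s t, 0 ≤ s → s ≤ t → φ t - φ s ≤ -c * ∫ r in s..t, φ r) :
    ∀ t, 0 ≤ t → φ t ≤ Real.exp (-c * t) * φ 0 := by
  intro t ht
  -- continuous extension of φ to all of ℝ
  set ψ : ℝ → ℝ := fun s => φ (max s 0) with hψdef
  have hψc : Continuous ψ :=
    hcont.comp_continuous (continuous_id.max continuous_const) fun x => Set.mem_Ici.mpr (le_max_right _ _)
  have hψeq : ∀ s, 0 ≤ s → ψ s = φ s := fun s hs => by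
    simp [hψdef, max_eq_left hs]
  have hint : ∀ s, 0 ≤ s → s ≤ t → (∫ r in s..t, ψ r) = ∫ r in s..t, φ r := by
    intro s hs hst
    apply intervalIntegral.integral_congr
    intro r hr
    rw [Set.uIcc_of_le hst] at hr
    exact hψeq r (le_trans hs hr.1)
  set w : ℝ → ℝ := fun s => ∫ r in s..t, ψ r with hwdef
  have hwderiv : ∀ s : ℝ, HasDerivAt w (-ψ s) s := by
    intro s
    have h1 : HasDerivAt (fun u => ∫ r in t..u, ψ r) (ψ s) s :=
      intervalIntegral.integral_hasDerivAt_right (hψc.intervalIntegrable t s)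
        (hψc.stronglyMeasurable.stronglyMeasurableAtFilter) hψc.continuousAt
    have h2 : w = fun u => -(∫ r in t..u, ψ r) := by
      funext u
      simp [hwdef, intervalIntegral.integral_symm t u]
    rw [h2]
    exact h1.neg
  set v : ℝ → ℝ := fun s => Real.exp (c * s) * (w s + ψ t / c) with hvdef
  have hvderiv : ∀ s : ℝ, HasDerivAt v (Real.exp (c * s) * (c * w s + ψ t - ψ s)) s := by
    intro s
    have he : HasDerivAt (fun u : ℝ => Real.exp (c * u)) (c * Real.exp (c * s)) s := by
      have := ((hasDerivAt_id s).const_mul c).exp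
      simpa [mul_comm] using this
    have hw2 : HasDerivAt (fun u => w u + ψ t / c) (-ψ s) s := by
      simpa using (hwderiv s).add_const (ψ t / c)
    have := he.mul hw2
    refine this.congr_deriv ?_
    have hc1 : c * (ψ t / c) = ψ t := mul_div_cancel₀ _ hc.ne'
    linear_combination (Real.exp (c * s)) * hc1
  have hkey : ∀ s ∈ Set.Icc (0:ℝ) t, c * w s + ψ t - ψ s ≤ 0 := by
    intro s hs
    have h := hineq s t hs.1 hs.2
    rw [← hint s hs.1 hs.2] at h
    rw [hψeq t ht, hψeq s hs.1]
    linarith [h]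
  have hanti : AntitoneOn v (Set.Icc 0 t) := by
    apply antitoneOn_of_deriv_nonpos (convex_Icc 0 t)
    · exact fun s _ => ((hvderiv s).differentiableAt).continuousAt.continuousWithinAt
    · exact fun s _ => ((hvderiv s).differentiableAt).differentiableWithinAt
    · intro s hs
      rw [(hvderiv s).deriv]
      have hs' : s ∈ Set.Icc (0:ℝ) t := by
        rw [interior_Icc] at hs
        exact ⟨le_of_lt hs.1, le_of_lt hs.2⟩
      exact mul_nonpos_of_nonneg_of_nonpos (Real.exp_nonneg _) (hkey s hs')
  have hvt : v t ≤ v 0 := hanti (Set.left_mem_Icc.mpr ht) (Set.right_mem_Icc.mpr ht) ht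
  have hwt : w t = 0 := intervalIntegral.integral_same
  have hv0 : v 0 = w 0 + ψ t / c := by simp [hvdef]
  have hvt' : v t = Real.exp (c * t) * (ψ t / c) := by simp [hvdef, hwt]
  -- lower bound on w 0
  have hw0 : Real.exp (c * t) * (ψ t / c) ≤ w 0 + ψ t / c := by
    rw [← hvt', ← hv0]; exact hvt
  have h0 := hineq 0 t le_rfl ht
  rw [← hint 0 le_rfl ht] at h0
  rw [hψeq t ht] at hw0
  -- φ t - φ 0 ≤ -c * w 0, and w 0 ≥ exp(ct) φ t / c - φ t / c
  have hexp : Real.exp (-c * t) * Real.exp (c * t) = 1 := by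
    rw [← Real.exp_add]; ring_nf; exact Real.exp_zero
  have hepos : (0:ℝ) < Real.exp (c * t) := Real.exp_pos _
  have hene : (0:ℝ) < Real.exp (-c * t) := Real.exp_pos _
  have hc0 : c ≠ 0 := hc.ne'
  have hw00 : (∫ (r : ℝ) in (0:ℝ)..t, ψ r) = w 0 := rfl
  rw [hw00] at h0
  have hw0' : Real.exp (c * t) * φ t ≤ c * w 0 + φ t := by
    have h := mul_le_mul_of_nonneg_left hw0 hc.le
    field_simp at h
    linarith
  have hfin : Real.exp (c * t) * φ t ≤ φ 0 := by linarith
  calc φ t = Real.exp (-c * t) * (Real.exp (c * t) * φ t) := by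
        rw [← mul_assoc, hexp, one_mul]
    _ ≤ Real.exp (-c * t) * φ 0 := mul_le_mul_of_nonneg_left hfin hene.le
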